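/- Let z1 ≠ 0 be a complex number. Define 2×2 complex matrices a1 = [[a1', 0],[0, z1]], a2 = [[a2', b'c''/z1],[−b''c'/z1, z2]], d = [[0,0],[0,1]], and vectors b = (b', b'')ᵗ with b', b'' ∈ ℂ^r (as rows/columns appropriately), c = (c', c'') with c', c'' ∈ ℂ^r, where a1', a2' ∈ ℂ, b'c'', b''c' ∈ ℂ denote the scalar products, and suppose c''·b'' = 0 (dot product zero). Then the integrability condition a1 d a2 − a2 d a1 + b c = 0 holds if and only if [a1', a2'] ∈ ℂ is zero and b'c' = 0, i.e. (viewing everything as 2×2 matrix identities) the configuration satisfies a1 d a2 − a2 d a1 + bc = 0. -/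

import Mathlib

open Matrix

/-- Canonical form over the ideal boundary: with `a1 = diag(a1', z1)`,
`a2 = [[a2', b'c''/z1],[−b''c'/z1, z2]]`, `d = diag(0,1)` and `c''·b'' = 0`,
the integrability condition `a1 d a2 − a2 d a1 + bc = 0` holds iff `b'·c' = 0`. -/
theorem stmt2 {r : ℕ} (a1' a2' z1 z2 : ℂ) (hz1 : z1 ≠ 0)
    (b' b'' c' c'' : Fin r → ℂ) (h : c'' ⬝ᵥ b'' = 0) :
    let a1 : Matrix (Fin 2) (Fin 2) ℂ := !![a1', 0; 0, z1]
    let a2 : Matrix (Fin 2) (Fin 2) ℂ := !![a2', (b' ⬝ᵥ c'') / z1; -(b'' ⬝ᵥ c') / z1, z2]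
    let d : Matrix (Fin 2) (Fin 2) ℂ := !![0, 0; 0, 1]
    let bc : Matrix (Fin 2) (Fin 2) ℂ := !![b' ⬝ᵥ c', b' ⬝ᵥ c''; b'' ⬝ᵥ c', b'' ⬝ᵥ c'']
    (a1 * d * a2 - a2 * d * a1 + bc = 0 ↔ (a1' * a2' - a2' * a1' = 0 ∧ b' ⬝ᵥ c' = 0)) := by
  intro a1 a2 d bc
  have h2 : b'' ⬝ᵥ c'' = 0 := by rwa [dotProduct_comm]
  constructor
  · intro H
    refine ⟨by ring, ?_⟩
    have := congrFun (congrFun H 0) 0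
    simpa [a1, a2, d, bc, Matrix.mul_apply, Fin.sum_univ_two] using this
  · rintro ⟨-, hb⟩
    ext i j
    fin_cases i <;> fin_cases j <;>
      simp [a1, a2, d, bc, Matrix.mul_apply, Fin.sum_univ_two, hb, h2, div_mul_cancel₀, mul_div_cancel_left₀, hz1] <;>
      (try ring) <;>
      (rw [mul_comm z1, mul_inv_cancel_right₀ hz1]; ring)
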